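/- For every natural number n there exists a family of 2^n matrices X_1, …, X_{2^n} ∈ (ZMod 2)^{n×n}, each symmetric (X_kᵀ = X_k), such that for every nonzero vector v ∈ (ZMod 2)^n, the map k ↦ X_k · v is a bijection from {1, …, 2^n} onto (ZMod 2)^n; that is, {X_k v : 1 ≤ k ≤ 2^n} = F_2^n. -/

import Mathlib

open Matrix

/-- There is a family of `2^n` symmetric matrices over `F_2` such that for every nonzero
vector `v ∈ F_2^n` the map `k ↦ X_k v` is a bijection onto `F_2^n`. -/
theorem exists_symmetric_matrix_family (n : ℕ) :
    ∃ X : Fin (2 ^ n) → Matrix (Fin n) (Fin n) (ZMod 2),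
      (∀ k, (X k)ᵀ = X k) ∧
      ∀ v : Fin n → ZMod 2, v ≠ 0 →
        Function.Bijective fun k => (X k) *ᵥ v := by
  rcases Nat.eq_zero_or_pos n with hn | hn
  · subst hn
    exact ⟨fun _ => 0, fun _ => rfl, fun v hv => absurd (Subsingleton.elim v 0) hv⟩
  haveI : Fact (Nat.Prime 2) := ⟨Nat.prime_two⟩
  set F := GaloisField 2 n with hF
  haveI : Fintype F := Fintype.ofFinite F
  have hcard : Fintype.card F = 2 ^ n := by
    rw [← Nat.card_eq_fintype_card]; exact GaloisField.card 2 n hn.ne'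
  have hrank : Module.finrank (ZMod 2) F = n := GaloisField.finrank 2 hn.ne'
  let b : Module.Basis (Fin n) (ZMod 2) F := (Module.finBasis (ZMod 2) F).reindex (finCongr hrank)
  let e : Fin (2 ^ n) ≃ F := (Fintype.equivFinOfCardEq hcard).symm
  refine ⟨fun k => Matrix.of fun i j => Algebra.trace (ZMod 2) F (e k * b i * b j), ?_, ?_⟩
  · intro k
    ext i j
    simp only [Matrix.transpose_apply, Matrix.of_apply]
    rw [mul_right_comm]
  · intro v hv
    set w : F := b.equivFun.symm v with hw
    have hw0 : w ≠ 0 := by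
      intro h
      exact hv (by simpa [hw] using (LinearEquiv.map_eq_zero_iff b.equivFun.symm).mp h)
    have key : ∀ k i, ((Matrix.of fun i j => Algebra.trace (ZMod 2) F (e k * b i * b j)) *ᵥ v) i
        = Algebra.trace (ZMod 2) F (e k * b i * w) := by
      intro k i
      have : w = ∑ j, v j • b j := by
        simp [hw, Module.Basis.equivFun_symm_apply]
      rw [this, Finset.mul_sum, map_sum]
      simp only [Matrix.mulVec, dotProduct, Matrix.of_apply]
      refine Finset.sum_congr rfl fun j _ => ?_
      rw [mul_smul_comm, _root_.map_smul, smul_eq_mul, mul_comm]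
    rw [Fintype.bijective_iff_injective_and_card]
    constructor
    · intro k k' h
      have h' : ∀ i, Algebra.trace (ZMod 2) F (e k * b i * w)
          = Algebra.trace (ZMod 2) F (e k' * b i * w) := by
        intro i
        have := congrFun h i
        simpa only [key] using this
      have hz : ∀ i, Algebra.traceForm (ZMod 2) F ((e k - e k') * w) (b i) = 0 := by
        intro i
        have := sub_eq_zero.mpr (h' i)
        rw [← map_sub] at this
        rw [Algebra.traceForm_apply]
        rw [← this]
        congr 1
        ring
      have hz2 : Algebra.traceForm (ZMod 2) F ((e k - e k') * w) = 0 := b.ext fun i => by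
        simpa using hz i
      have hz3 : (e k - e k') * w = 0 :=
        (traceForm_nondegenerate (ZMod 2) F).1 _ (fun y => by rw [hz2]; rfl)
      rcases mul_eq_zero.mp hz3 with h0 | h0
      · exact e.injective (sub_eq_zero.mp h0)
      · exact absurd h0 hw0
    · simp [ZMod.card]
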